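/- In the basic potential-outcome setup with no confounding, assuming ℙ(E=1) > 0, ℙ(E=0) > 0, ℙ(R = 1 ∣ E = 1) > 0 and ℙ(R = 1 ∣ E = 0) > 0, the probability of causation satisfies the lower bound PC ≥ max(0, 1 − 1/RR), where RR = ℙ(R = 1 ∣ E = 1)/ℙ(R = 1 ∣ E = 0) is the risk ratio. -/

import Mathlib

open MeasureTheory ProbabilityTheory

/-- **Lower bound on the probability of causation (basic setup, no confounding).**
In the basic potential-outcome setup (`E` the binary exposure, `R₀, R₁` the binary
potential responses, observed response `R = R₁` on `{E = 1}` and `R = R₀` on `{E = 0}`,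
and `E` independent of the pair `(R₀, R₁)`), assuming `ℙ(E=1) > 0`, `ℙ(E=0) > 0`,
`ℙ(R=1 ∣ E=1) > 0` and `ℙ(R=1 ∣ E=0) > 0`, the probability of causation
`PC = ℙ(R₀ = 0 ∣ E = 1, R₁ = 1)` satisfies `PC ≥ max 0 (1 - 1/RR)`, where
`RR = ℙ(R=1 ∣ E=1) / ℙ(R=1 ∣ E=0)` is the risk ratio. -/
theorem pc_lower_bound
    {Ω : Type*} [MeasurableSpace Ω] (μ : Measure Ω) [IsProbabilityMeasure μ]
    (E R₀ R₁ R : Ω → Bool)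
    (hEmeas : Measurable E) (hR₀meas : Measurable R₀) (hR₁meas : Measurable R₁)
    (hR : R = fun ω => if E ω then R₁ ω else R₀ ω)
    (hindep : IndepFun E (fun ω => (R₀ ω, R₁ ω)) μ)
    (hpos1 : 0 < μ {ω | E ω = true}) (hpos0 : 0 < μ {ω | E ω = false})
    (p₁ p₀ : ℝ)
    (hp₁ : p₁ = (μ[|{ω | E ω = true}] {ω | R ω = true}).toReal)
    (hp₀ : p₀ = (μ[|{ω | E ω = false}] {ω | R ω = true}).toReal)
    (hp₁pos : 0 < p₁) (hp₀pos : 0 < p₀)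
    (RR : ℝ) (hRR : RR = p₁ / p₀)
    (PC : ℝ)
    (hPC : PC = (μ[|{ω | E ω = true ∧ R₁ ω = true}] {ω | R₀ ω = false}).toReal) :
    PC ≥ max 0 (1 - 1 / RR) := by
  classical
  set G : Ω → Bool × Bool := (fun ω => (R₀ ω, R₁ ω)) with hG
  have hGmeas : Measurable G := hR₀meas.prodMk hR₁meas
  have key : ∀ (A : Set Bool) (S : Set (Bool × Bool)),
      μ (E ⁻¹' A ∩ G ⁻¹' S) = μ (E ⁻¹' A) * μ (G ⁻¹' S) := fun A S =>
    hindep.measure_inter_preimage_eq_mul A S (Set.toFinite _).measurableSet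
      (Set.toFinite _).measurableSet
  -- measurable sets
  have hmE : MeasurableSet {ω | E ω = true} :=
    (hEmeas (measurableSet_singleton true) : MeasurableSet (E ⁻¹' {true}))
  have hmE0 : MeasurableSet {ω | E ω = false} :=
    (hEmeas (measurableSet_singleton false) : MeasurableSet (E ⁻¹' {false}))
  have hmEA : MeasurableSet {ω | E ω = true ∧ R₁ ω = true} := by
    have : {ω | E ω = true ∧ R₁ ω = true}
        = {ω | E ω = true} ∩ {ω | R₁ ω = true} := rfl
    rw [this]
    exact hmE.inter (hR₁meas (measurableSet_singleton true) : MeasurableSet (R₁ ⁻¹' {true}))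
  -- basic quantities
  have hq0 : μ {ω | E ω = true} ≠ 0 := hpos1.ne'
  have hqt : μ {ω | E ω = true} ≠ ⊤ := measure_ne_top _ _
  have hq0' : μ {ω | E ω = false} ≠ 0 := hpos0.ne'
  have hqt' : μ {ω | E ω = false} ≠ ⊤ := measure_ne_top _ _
  -- p₁ = μ {R₁ = true}
  have h1 : μ[|{ω | E ω = true}] {ω | R ω = true} = μ {ω | R₁ ω = true} := by
    rw [cond_apply hmE]
    have hset : {ω | E ω = true} ∩ {ω | R ω = true}
        = E ⁻¹' {true} ∩ G ⁻¹' {p | p.2 = true} := by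
      ext ω
      simp only [Set.mem_inter_iff, Set.mem_setOf_eq, Set.mem_preimage,
        Set.mem_singleton_iff, hR, hG]
      constructor
      · rintro ⟨h1, h2⟩; simp [h1] at h2; exact ⟨h1, h2⟩
      · rintro ⟨h1, h2⟩; exact ⟨h1, by simp [h1, h2]⟩
    rw [hset, key]
    have hE' : E ⁻¹' {true} = {ω | E ω = true} := rfl
    have hA' : G ⁻¹' {p | p.2 = true} = {ω | R₁ ω = true} := rfl
    rw [hE', hA', ← mul_assoc, ENNReal.inv_mul_cancel hq0 hqt, one_mul]
  -- p₀ = μ {R₀ = true}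
  have h0 : μ[|{ω | E ω = false}] {ω | R ω = true} = μ {ω | R₀ ω = true} := by
    rw [cond_apply hmE0]
    have hset : {ω | E ω = false} ∩ {ω | R ω = true}
        = E ⁻¹' {false} ∩ G ⁻¹' {p | p.1 = true} := by
      ext ω
      simp only [Set.mem_inter_iff, Set.mem_setOf_eq, Set.mem_preimage,
        Set.mem_singleton_iff, hR, hG]
      constructor
      · rintro ⟨h1, h2⟩; simp [h1] at h2; exact ⟨h1, h2⟩
      · rintro ⟨h1, h2⟩; exact ⟨h1, by simp [h1, h2]⟩
    rw [hset, key]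
    have hE' : E ⁻¹' {false} = {ω | E ω = false} := rfl
    have hA' : G ⁻¹' {p | p.1 = true} = {ω | R₀ ω = true} := rfl
    rw [hE', hA', ← mul_assoc, ENNReal.inv_mul_cancel hq0' hqt', one_mul]
  set a : ENNReal := μ {ω | R₁ ω = true} with ha
  set b : ENNReal := μ {ω | R₀ ω = true} with hb
  set c : ENNReal := μ {ω | R₁ ω = true ∧ R₀ ω = false} with hc
  have hat : a ≠ ⊤ := measure_ne_top _ _
  have hbt : b ≠ ⊤ := measure_ne_top _ _
  have hct : c ≠ ⊤ := measure_ne_top _ _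
  have hp₁a : p₁ = a.toReal := by rw [hp₁, h1]
  have hp₀b : p₀ = b.toReal := by rw [hp₀, h0]
  have ha0 : a ≠ 0 := by
    intro h; rw [hp₁a, h] at hp₁pos; simp at hp₁pos
  -- PC = (a⁻¹ * c).toReal
  have hPC' : PC = (a⁻¹ * c).toReal := by
    rw [hPC, cond_apply hmEA]
    have hs1 : {ω | E ω = true ∧ R₁ ω = true}
        = E ⁻¹' {true} ∩ G ⁻¹' {p | p.2 = true} := rfl
    have hs2 : {ω | E ω = true ∧ R₁ ω = true} ∩ {ω | R₀ ω = false}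
        = E ⁻¹' {true} ∩ G ⁻¹' {p | p.2 = true ∧ p.1 = false} := by
      ext ω
      simp only [Set.mem_inter_iff, Set.mem_setOf_eq, Set.mem_preimage,
        Set.mem_singleton_iff, hG]
      tauto
    rw [hs2, key, hs1, key]
    have hA' : (μ (G ⁻¹' {p | p.2 = true}) : ENNReal) = a := rfl
    have hC' : (μ (G ⁻¹' {p | p.2 = true ∧ p.1 = false}) : ENNReal) = c := rfl
    have hE' : E ⁻¹' {true} = {ω | E ω = true} := rfl
    rw [hA', hC', hE']
    rw [ENNReal.mul_inv (Or.inl hq0) (Or.inl hqt)]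
    congr 1
    calc (μ {ω | E ω = true})⁻¹ * a⁻¹ * (μ {ω | E ω = true} * c)
        = ((μ {ω | E ω = true})⁻¹ * μ {ω | E ω = true}) * (a⁻¹ * c) := by ring
      _ = a⁻¹ * c := by rw [ENNReal.inv_mul_cancel hq0 hqt, one_mul]
  -- key inequality a ≤ c + b
  have hsub : {ω | R₁ ω = true} ⊆ {ω | R₁ ω = true ∧ R₀ ω = false} ∪ {ω | R₀ ω = true} := by
    intro ω h
    by_cases h0 : R₀ ω = true <;> simp_all
  have hle : a ≤ c + b := le_trans (measure_mono hsub) (measure_union_le _ _)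
  -- to reals
  have hle' : a.toReal ≤ c.toReal + b.toReal := by
    rw [← ENNReal.toReal_add hct hbt]
    exact ENNReal.toReal_le_toReal hat (by finiteness) |>.mpr hle
  have haR : 0 < a.toReal := hp₁a ▸ hp₁pos
  have hbR : 0 < b.toReal := hp₀b ▸ hp₀pos
  have hPCR : PC = c.toReal / a.toReal := by
    rw [hPC', ENNReal.toReal_mul, ENNReal.toReal_inv]
    rw [inv_mul_eq_div]
  rw [ge_iff_le, max_le_iff]
  constructor
  · rw [hPCR]; positivity
  · rw [hRR, hp₁a, hp₀b, hPCR]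
    rw [one_div_div]
    rw [sub_le_iff_le_add, ← add_div, le_div_iff₀ haR, one_mul]
    linarith
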